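/- Let S be a totally disconnected compact Hausdorff space whose algebra of clopen sets 𝒰(S) has the subsequential completeness property: for any sequence (Uₙ) of pairwise disjoint clopen sets there is an infinite M ⊆ ℕ such that the closure of ⋃_{m∈M} Uₘ is open. Let (μₙ) be a sequence of nonnegative finitely additive functions on 𝒰(S), and (νₙ) a sequence of nonnegative monotone additive functions on the topology τ(S) with νₙ(S)=1 for all n, such that for each n and ε>0 there exists a clopen A with μₘ(A) < ε for all m and νₙ(S∖A) < ε. Then there exists an infinite set Λ ⊆ ℕ such that for each ε > 0 there is a clopen set Q with μₘ(Q) < ε for all m ∈ ℕ and νₙ(S∖Q) < ε for all n ∈ Λ. -/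

import Mathlib

open Set Function

section Stmt10Aux

variable {S : Type*} [TopologicalSpace S]

/-- An open set disjoint from a set is disjoint from its closure. -/
private lemma open_disj_closure {W X : Set S} (hW : IsOpen W) (h : W ∩ X = ∅) :
    W ∩ closure X = ∅ := by
  have h2 := hW.inter_closure (t := X)
  rw [h, closure_empty] at h2
  exact subset_empty_iff.mp h2

/-- Dependent-choice style chain construction. -/
private lemma exists_chain {α : Type*} (P : ℕ → α → Prop) (R : ℕ → α → α → Prop) (a0 : α)
    (h0 : P 0 a0) (hstep : ∀ i a, P i a → ∃ b, P (i + 1) b ∧ R i a b) :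
    ∃ f : ℕ → α, f 0 = a0 ∧ (∀ i, P i (f i)) ∧ ∀ i, R i (f i) (f (i + 1)) := by
  let F : ∀ i : ℕ, {a : α // P i a} := fun i =>
    Nat.rec ⟨a0, h0⟩
      (fun i prev => ⟨Classical.choose (hstep i prev.1 prev.2),
        (Classical.choose_spec (hstep i prev.1 prev.2)).1⟩) i
  refine ⟨fun i => (F i).1, rfl, fun i => (F i).2, fun i => ?_⟩
  exact (Classical.choose_spec (hstep i (F i).1 (F i).2)).2

section Mu

variable (μ : ℕ → Set S → ℝ)
variable (hμ_nonneg : ∀ n A, IsClopen A → 0 ≤ μ n A)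
variable (hμ_add : ∀ n (A B : Set S), IsClopen A → IsClopen B → Disjoint A B →
      μ n (A ∪ B) = μ n A + μ n B)

include hμ_add in
private lemma mu_empty (n : ℕ) : μ n ∅ = 0 := by
  have := hμ_add n ∅ ∅ isClopen_empty isClopen_empty (disjoint_bot_left)
  simp at this
  linarith

include hμ_nonneg hμ_add in
private lemma mu_mono (n : ℕ) {A B : Set S} (hA : IsClopen A) (hB : IsClopen B)
    (hsub : A ⊆ B) : μ n A ≤ μ n B := by
  have hd : IsClopen (B \ A) := hB.diff hA
  have := hμ_add n A (B \ A) hA hd disjoint_sdiff_right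
  rw [union_diff_cancel hsub] at this
  have h0 := hμ_nonneg n (B \ A) hd
  linarith

include hμ_nonneg hμ_add in
private lemma mu_union_le (n : ℕ) {A B : Set S} (hA : IsClopen A) (hB : IsClopen B) :
    μ n (A ∪ B) ≤ μ n A + μ n B := by
  have hd : IsClopen (B \ A) := hB.diff hA
  have h1 := hμ_add n A (B \ A) hA hd disjoint_sdiff_right
  rw [union_diff_self] at h1
  have h2 := mu_mono μ hμ_nonneg hμ_add n hd hB diff_subset
  linarith

include hμ_nonneg hμ_add in
private lemma mu_biUnion_le (n : ℕ) {ι : Type*} (H : ι → Set S) (hH : ∀ i, IsClopen (H i))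
    (F : Finset ι) : μ n (⋃ i ∈ F, H i) ≤ ∑ i ∈ F, μ n (H i) := by
  classical
  induction F using Finset.induction with
  | empty => simp [mu_empty μ hμ_add n]
  | @insert a F ha ih =>
    rw [Finset.set_biUnion_insert, Finset.sum_insert ha]
    have hcl : IsClopen (⋃ i ∈ F, H i) := by
      refine ⟨Set.Finite.isClosed_biUnion F.finite_toSet (fun i _ => (hH i).isClosed), ?_⟩
      exact isOpen_biUnion (fun i _ => (hH i).isOpen)
    calc μ n (H a ∪ ⋃ i ∈ F, H i) ≤ μ n (H a) + μ n (⋃ i ∈ F, H i) :=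
          mu_union_le μ hμ_nonneg hμ_add n (hH a) hcl
      _ ≤ μ n (H a) + ∑ i ∈ F, μ n (H i) := by linarith

private lemma biUnion_clopen {ι : Type*} (H : ι → Set S) (hH : ∀ i, IsClopen (H i))
    (F : Finset ι) : IsClopen (⋃ i ∈ F, H i) :=
  ⟨Set.Finite.isClosed_biUnion F.finite_toSet (fun i _ => (hH i).isClosed),
    isOpen_biUnion (fun i _ => (hH i).isOpen)⟩

include hμ_nonneg hμ_add in
private lemma mu_disjoint_sum_le (n : ℕ) {ι : Type*} (W : ι → Set S)
    (hW : ∀ i, IsClopen (W i)) (F : Finset ι)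
    (hdisj : ∀ i ∈ F, ∀ j ∈ F, i ≠ j → Disjoint (W i) (W j)) :
    ∑ i ∈ F, μ n (W i) ≤ μ n univ := by
  classical
  have key : ∀ (F : Finset ι), (∀ i ∈ F, ∀ j ∈ F, i ≠ j → Disjoint (W i) (W j)) →
      ∑ i ∈ F, μ n (W i) = μ n (⋃ i ∈ F, W i) := by
    intro F
    induction F using Finset.induction with
    | empty => simp [mu_empty μ hμ_add n]
    | @insert a F ha ih =>
      intro hd
      rw [Finset.set_biUnion_insert, Finset.sum_insert ha]
      have hdF : ∀ i ∈ F, ∀ j ∈ F, i ≠ j → Disjoint (W i) (W j) := by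
        intro i hi j hj hij
        exact hd i (Finset.mem_insert_of_mem hi) j (Finset.mem_insert_of_mem hj) hij
      rw [ih hdF]
      have hda : Disjoint (W a) (⋃ i ∈ F, W i) := by
        refine Set.disjoint_iff.mpr ?_
        rintro x ⟨hx1, hx2⟩
        obtain ⟨i, hi, hxi⟩ := Set.mem_iUnion₂.mp hx2
        have hne : a ≠ i := fun h => ha (h ▸ hi)
        exact (hd a (Finset.mem_insert_self a F) i (Finset.mem_insert_of_mem hi) hne).le_bot
          ⟨hx1, hxi⟩
      exact (hμ_add n _ _ (hW a) (biUnion_clopen W hW F) hda).symm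
  rw [key F hdisj]
  exact mu_mono μ hμ_nonneg hμ_add n (biUnion_clopen W hW F) isClopen_univ (subset_univ _)

end Mu

private lemma sum_pow_half_le (F : Finset ℕ) : ∑ i ∈ F, ((2:ℝ)⁻¹) ^ i ≤ 2 := by
  classical
  obtain ⟨n, hn⟩ : ∃ n, ∀ i ∈ F, i < n := ⟨(F.sup id) + 1, fun i hi =>
    Nat.lt_succ_of_le (Finset.le_sup (f := id) hi)⟩
  calc ∑ i ∈ F, ((2:ℝ)⁻¹) ^ i ≤ ∑ i ∈ Finset.range n, ((2:ℝ)⁻¹) ^ i := by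
        refine Finset.sum_le_sum_of_subset_of_nonneg ?_ (fun i _ _ => by positivity)
        intro i hi; exact Finset.mem_range.mpr (hn i hi)
    _ ≤ 2 := by
        have := sum_geometric_two_le n
        simp only [one_div] at this
        exact this



section Part2

variable {S : Type*} [TopologicalSpace S]

section Nu

variable (ν : ℕ → Set S → ℝ)
variable (hν_mono : ∀ n (A B : Set S), IsOpen A → IsOpen B → A ⊆ B → ν n A ≤ ν n B)
variable (hν_add : ∀ n (A B : Set S), IsOpen A → IsOpen B → Disjoint A B →
      ν n (A ∪ B) = ν n A + ν n B)
variable (hν_one : ∀ n, ν n Set.univ = 1)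

include hν_add hν_one in
private lemma nu_compl (n : ℕ) {A : Set S} (hA : IsClopen A) : ν n A + ν n Aᶜ = 1 := by
  have := hν_add n A Aᶜ hA.isOpen hA.isClosed.isOpen_compl disjoint_compl_right
  rw [union_compl_self, hν_one] at this
  linarith

include hν_mono hν_one in
private lemma nu_le_one (n : ℕ) {A : Set S} (hA : IsOpen A) : ν n A ≤ 1 := by
  have := hν_mono n A univ hA isOpen_univ (subset_univ _)
  rw [hν_one] at this
  exact this

end Nu

/-- Branch encoding : to a function `f : ℕ → Bool` and a depth `k` we associate a natural
number coding the pair `(k, f↾k)`. -/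
private noncomputable def br (f : ℕ → Bool) (k : ℕ) : ℕ :=
  Nat.pair k (Encodable.encode ((List.range k).map f))

private lemma br_eq {f g : ℕ → Bool} {k k' : ℕ} (h : br f k = br g k') :
    k = k' ∧ ∀ i < k, f i = g i := by
  rw [br, br, Nat.pair_eq_pair] at h
  obtain ⟨hk, henc⟩ := h
  have hl : (List.range k).map f = (List.range k').map g := Encodable.encode_injective henc
  subst hk
  refine ⟨rfl, fun i hi => ?_⟩
  have := congrArg (fun l => l[i]?) hl
  simp only [List.getElem?_map, List.getElem?_range hi] at this
  simpa using this

private lemma br_inj (f : ℕ → Bool) : Function.Injective (br f) :=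
  fun _ _ h => (br_eq h).1

private lemma br_range_inter_finite {f g : ℕ → Bool} (h : f ≠ g) :
    (Set.range (br f) ∩ Set.range (br g)).Finite := by
  obtain ⟨d, hd⟩ := Function.ne_iff.mp h
  have hsub : Set.range (br f) ∩ Set.range (br g) ⊆ (br f) '' (Set.Iic d) := by
    rintro x ⟨⟨k, rfl⟩, ⟨k', hk'⟩⟩
    obtain ⟨hkk, hpre⟩ := br_eq hk'.symm
    refine ⟨k, ?_, rfl⟩
    simp only [Set.mem_Iic]
    by_contra hkd
    push_neg at hkd
    exact hd (hpre d (by omega))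
  exact (Set.finite_Iic d).image _ |>.subset hsub

/-- Splitting a closure of a union along a finite set of indices. -/
private lemma closure_split (H : ℕ → Set S) (hcl : ∀ i, IsClosed (H i)) (M F : Set ℕ)
    (hF : F.Finite) :
    closure (⋃ i ∈ M, H i) ⊆ (⋃ i ∈ M ∩ F, H i) ∪ closure (⋃ i ∈ M \ F, H i) := by
  have hM : ⋃ i ∈ M, H i = (⋃ i ∈ M ∩ F, H i) ∪ ⋃ i ∈ M \ F, H i := by
    rw [← Set.biUnion_union]
    congr 1
    rw [Set.inter_union_diff]
  rw [hM, closure_union]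
  apply Set.union_subset_union_left
  exact (IsClosed.closure_eq (Set.Finite.isClosed_biUnion (hF.subset Set.inter_subset_right)
    (fun i _ => hcl i))).subset

/-- Key geometric lemma: the intersection of two glued closures is inside the humps with
common indices, provided one of the closures is open. -/
private lemma clV_inter_subset (H : ℕ → Set S) (hcl : ∀ i, IsClopen (H i))
    (hdisj : Pairwise (Function.onFun Disjoint H)) (M₁ M₂ F : Set ℕ) (hF : F.Finite)
    (hsub : M₁ ∩ M₂ ⊆ F) (hV₂open : IsOpen (closure (⋃ i ∈ M₂, H i))) :
    closure (⋃ i ∈ M₁, H i) ∩ closure (⋃ i ∈ M₂, H i) ⊆ ⋃ i ∈ F, H i := by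
  set X₁ := ⋃ i ∈ M₁ \ F, H i with hX₁
  set X₂ := ⋃ i ∈ M₂ \ F, H i with hX₂
  set V₁ := closure (⋃ i ∈ M₁, H i)
  set V₂ := closure (⋃ i ∈ M₂, H i)
  -- each H i with i ∈ M₁ \ F is disjoint from X₂
  have hHiX₂ : ∀ i ∈ M₁ \ F, H i ∩ X₂ = ∅ := by
    rintro i ⟨hiM, hiF⟩
    rw [Set.eq_empty_iff_forall_notMem]
    rintro x ⟨hx1, hx2⟩
    obtain ⟨j, hj, hxj⟩ := Set.mem_iUnion₂.mp hx2
    have hne : i ≠ j := by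
      rintro rfl
      exact hiF (hsub ⟨hiM, hj.1⟩)
    exact (hdisj hne).le_bot ⟨hx1, hxj⟩
  -- H i with i ∈ M₂ ∩ F is disjoint from X₂ as well
  have hHiX₂' : ∀ i ∈ M₂ ∩ F, H i ∩ X₂ = ∅ := by
    rintro i ⟨hiM, hiF⟩
    rw [Set.eq_empty_iff_forall_notMem]
    rintro x ⟨hx1, hx2⟩
    obtain ⟨j, hj, hxj⟩ := Set.mem_iUnion₂.mp hx2
    have hne : i ≠ j := by
      rintro rfl
      exact hj.2 hiF
    exact (hdisj hne).le_bot ⟨hx1, hxj⟩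
  -- closure X₂ = V₂ \ ⋃ i ∈ M₂ ∩ F, H i , hence clopen (in particular open)
  have hclX₂sub : closure X₂ ⊆ V₂ := closure_mono (Set.biUnion_subset_biUnion_left
    Set.diff_subset)
  have hclX₂disj : closure X₂ ∩ (⋃ i ∈ M₂ ∩ F, H i) = ∅ := by
    rw [Set.eq_empty_iff_forall_notMem]
    rintro x ⟨hx1, hx2⟩
    obtain ⟨j, hj, hxj⟩ := Set.mem_iUnion₂.mp hx2
    have := open_disj_closure (hcl j).isOpen (hHiX₂' j hj)
    rw [Set.eq_empty_iff_forall_notMem] at this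
    exact this x ⟨hxj, hx1⟩
  have hV₂split := closure_split H (fun i => (hcl i).isClosed) M₂ F hF
  have hclX₂eq : closure X₂ = V₂ \ ⋃ i ∈ M₂ ∩ F, H i := by
    apply Set.Subset.antisymm
    · intro x hx
      refine ⟨hclX₂sub hx, fun hx2 => ?_⟩
      rw [Set.eq_empty_iff_forall_notMem] at hclX₂disj
      exact hclX₂disj x ⟨hx, hx2⟩
    · intro x hx
      rcases hV₂split hx.1 with h | h
      · exact absurd h hx.2
      · exact h
  have hclX₂open : IsOpen (closure X₂) := by
    rw [hclX₂eq]
    exact hV₂open.sdiff (Set.Finite.isClosed_biUnion (hF.subset Set.inter_subset_right)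
      (fun i _ => (hcl i).isClosed))
  -- closure X₂ is disjoint from X₁, hence from closure X₁
  have hclX₂X₁ : closure X₂ ∩ X₁ = ∅ := by
    rw [Set.eq_empty_iff_forall_notMem]
    rintro x ⟨hx1, hx2⟩
    obtain ⟨j, hj, hxj⟩ := Set.mem_iUnion₂.mp hx2
    have := open_disj_closure (hcl j).isOpen (hHiX₂ j hj)
    rw [Set.eq_empty_iff_forall_notMem] at this
    exact this x ⟨hxj, hx1⟩
  have hclcl : closure X₂ ∩ closure X₁ = ∅ := open_disj_closure hclX₂open hclX₂X₁
  -- conclude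
  intro x hx
  by_contra hxF
  have hx1 : x ∈ closure X₁ := by
    rcases closure_split H (fun i => (hcl i).isClosed) M₁ F hF hx.1 with h | h
    · obtain ⟨j, hj, hxj⟩ := Set.mem_iUnion₂.mp h
      exact absurd (Set.mem_biUnion hj.2 hxj) hxF
    · exact h
  have hx2 : x ∈ closure X₂ := by
    rcases hV₂split hx.2 with h | h
    · obtain ⟨j, hj, hxj⟩ := Set.mem_iUnion₂.mp h
      exact absurd (Set.mem_biUnion hj.2 hxj) hxF
    · exact h
  rw [Set.eq_empty_iff_forall_notMem] at hclcl
  exact hclcl x ⟨hx2, hx1⟩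

end Part2

section Part3

variable {S : Type*} [TopologicalSpace S]

/-- Main SCP gluing lemma: if the humps `H i` have `μ m (H i) ≤ 2⁻ⁱ η` uniformly in `m`,
then one can glue infinitely many of them into a clopen set of `μ`-measure `≤ 3η`
uniformly in `m`. -/
private lemma scp_small
    (hSCP : ∀ U : ℕ → Set S, (∀ n, IsClopen (U n)) →
      Pairwise (Function.onFun Disjoint U) →
      ∃ M : Set ℕ, M.Infinite ∧ IsOpen (closure (⋃ m ∈ M, U m)))
    (μ : ℕ → Set S → ℝ)
    (hμ_nonneg : ∀ n A, IsClopen A → 0 ≤ μ n A)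
    (hμ_add : ∀ n (A B : Set S), IsClopen A → IsClopen B → Disjoint A B →
      μ n (A ∪ B) = μ n A + μ n B)
    (H : ℕ → Set S) (hHcl : ∀ i, IsClopen (H i))
    (hHdisj : Pairwise (Function.onFun Disjoint H)) {η : ℝ} (hη : 0 < η)
    (hsmall : ∀ m i, μ m (H i) ≤ (2⁻¹) ^ i * η) :
    ∃ M : Set ℕ, M.Infinite ∧ IsClopen (closure (⋃ i ∈ M, H i)) ∧
      ∀ m, μ m (closure (⋃ i ∈ M, H i)) ≤ 3 * η := by
  classical
  -- apply SCP along every branch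
  have hch : ∀ f : ℕ → Bool, ∃ M0 : Set ℕ, M0.Infinite ∧
      IsOpen (closure (⋃ k ∈ M0, H (br f k))) := by
    intro f
    refine hSCP (fun k => H (br f k)) (fun k => hHcl _) ?_
    intro k k' hkk
    exact hHdisj (fun h => hkk (br_inj f h))
  choose M0 hM0inf hM0open using hch
  set Ms : (ℕ → Bool) → Set ℕ := fun f => (br f) '' (M0 f) with hMs
  set V : (ℕ → Bool) → Set S := fun f => closure (⋃ i ∈ Ms f, H i) with hV
  have hVeq : ∀ f, (⋃ i ∈ Ms f, H i) = ⋃ k ∈ M0 f, H (br f k) := fun f =>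
    Set.biUnion_image
  have hVopen : ∀ f, IsOpen (V f) := by
    intro f
    rw [hV]
    simp only
    rw [hVeq f]
    exact hM0open f
  have hVclopen : ∀ f, IsClopen (V f) := fun f => ⟨isClosed_closure, hVopen f⟩
  have hMsInf : ∀ f, (Ms f).Infinite := fun f => (hM0inf f).image (br_inj f).injOn
  have hMssub : ∀ f, Ms f ⊆ Set.range (br f) := fun f => Set.image_subset_range _ _
  -- the bad branches for each m form a finite set
  set bad : ℕ → Set (ℕ → Bool) := fun m => {f | 3 * η < μ m (V f)} with hbad
  have hbadfin : ∀ m, (bad m).Finite := by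
    intro m
    by_contra hinf
    obtain ⟨L, hL⟩ := exists_nat_gt (μ m univ / η)
    obtain ⟨T, hTsub, hTcard⟩ := Set.Infinite.exists_subset_card_eq hinf (L + 1)
    have hμL : μ m univ < (L + 1) * η := by
      rw [div_lt_iff₀ hη] at hL
      have : (L : ℝ) * η ≤ (L + 1) * η := by nlinarith
      linarith
    -- enumerate T
    set σ : Fin T.card → (ℕ → Bool) := fun j => (T.equivFin.symm j).1 with hσ
    have hσinj : Function.Injective σ := fun j j' h => by
      have := Subtype.ext h
      simpa using T.equivFin.symm.injective this
    have hσT : ∀ j, σ j ∈ T := fun j => (T.equivFin.symm j).2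
    have hσbad : ∀ j, 3 * η < μ m (V (σ j)) := fun j => hTsub (hσT j)
    -- disjointified sets
    set W : Fin T.card → Set S := fun j =>
      V (σ j) \ ⋃ l ∈ Finset.univ.filter (· < j), V (σ l) with hW
    have hWclopen : ∀ j, IsClopen (W j) := by
      intro j
      exact (hVclopen _).diff (biUnion_clopen _ (fun l => hVclopen _) _)
    have hWdisj : ∀ i j : Fin T.card, i ≠ j → Disjoint (W i) (W j) := by
      intro i j hij
      rcases lt_or_gt_of_ne hij with h | h
      · refine Set.disjoint_left.mpr ?_
        rintro x ⟨hx1, _⟩ ⟨_, hx4⟩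
        exact hx4 (Set.mem_biUnion (Finset.mem_filter.mpr ⟨Finset.mem_univ _, h⟩) hx1)
      · refine Set.disjoint_left.mpr ?_
        rintro x ⟨_, hx2⟩ ⟨hx3, _⟩
        exact hx2 (Set.mem_biUnion (Finset.mem_filter.mpr ⟨Finset.mem_univ _, h⟩) hx3)
    -- each W j has measure > η
    have hWbig : ∀ j, η < μ m (W j) := by
      intro j
      -- V (σ j) \ W j is covered by humps with indices in a finite set E
      set E : Set ℕ := ⋃ l ∈ Finset.univ.filter (· < j), (Ms (σ j) ∩ Ms (σ l)) with hE
      have hEfin : E.Finite := by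
        refine Set.Finite.biUnion (Finset.univ.filter (· < j)).finite_toSet ?_
        intro l hl
        have hne : σ j ≠ σ l := by
          intro h
          have := hσinj h
          rw [this] at hl
          simp at hl
        exact (br_range_inter_finite hne).subset
          (Set.inter_subset_inter (hMssub _) (hMssub _))
      have hcover : V (σ j) \ W j ⊆ ⋃ i ∈ E, H i := by
        intro x hx
        have hx2 : x ∈ ⋃ l ∈ Finset.univ.filter (· < j), V (σ l) := by
          by_contra hc
          exact hx.2 ⟨hx.1, hc⟩
        obtain ⟨l, hl, hxl⟩ := Set.mem_iUnion₂.mp hx2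
        have hne : σ j ≠ σ l := by
          intro h
          have := hσinj h
          rw [this] at hl
          simp at hl
        have hint := clV_inter_subset H hHcl hHdisj (Ms (σ j)) (Ms (σ l))
          (Ms (σ j) ∩ Ms (σ l))
          (((br_range_inter_finite hne).subset
            (Set.inter_subset_inter (hMssub _) (hMssub _))))
          subset_rfl (hVopen (σ l)) ⟨hx.1, hxl⟩
        obtain ⟨i, hi, hxi⟩ := Set.mem_iUnion₂.mp hint
        exact Set.mem_biUnion (Set.mem_biUnion hl hi) hxi
      have hEbound : μ m (⋃ i ∈ E, H i) ≤ 2 * η := by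
        have h1 : (⋃ i ∈ E, H i) = ⋃ i ∈ hEfin.toFinset, H i := by
          simp [Set.Finite.mem_toFinset]
        rw [h1]
        calc μ m (⋃ i ∈ hEfin.toFinset, H i) ≤ ∑ i ∈ hEfin.toFinset, μ m (H i) :=
              mu_biUnion_le μ hμ_nonneg hμ_add m H hHcl _
          _ ≤ ∑ i ∈ hEfin.toFinset, (2⁻¹) ^ i * η := Finset.sum_le_sum (fun i _ => hsmall m i)
          _ = (∑ i ∈ hEfin.toFinset, ((2:ℝ)⁻¹) ^ i) * η := by rw [Finset.sum_mul]
          _ ≤ 2 * η := by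
              have := sum_pow_half_le hEfin.toFinset
              nlinarith
      have hsplit : μ m (V (σ j)) ≤ μ m (W j) + μ m (⋃ i ∈ E, H i) := by
        have hWsub : W j ⊆ V (σ j) := Set.diff_subset
        have h1 : V (σ j) = W j ∪ (V (σ j) \ W j) := (Set.union_diff_cancel hWsub).symm
        have hdiffcl : IsClopen (V (σ j) \ W j) := (hVclopen _).diff (hWclopen j)
        have hEcl : IsClopen (⋃ i ∈ hEfin.toFinset, H i) := biUnion_clopen _ hHcl _
        have h2 : μ m (V (σ j)) ≤ μ m (W j) + μ m (V (σ j) \ W j) := by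
          calc μ m (V (σ j)) = μ m (W j ∪ (V (σ j) \ W j)) := by rw [← h1]
            _ ≤ μ m (W j) + μ m (V (σ j) \ W j) :=
                mu_union_le μ hμ_nonneg hμ_add m (hWclopen j) hdiffcl
        have h3 : μ m (V (σ j) \ W j) ≤ μ m (⋃ i ∈ E, H i) := by
          have h4 : (⋃ i ∈ E, H i) = ⋃ i ∈ hEfin.toFinset, H i := by
            simp [Set.Finite.mem_toFinset]
          rw [h4]
          refine mu_mono μ hμ_nonneg hμ_add m hdiffcl hEcl ?_
          rw [← h4]
          exact hcover
        linarith
      have := hσbad j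
      linarith
    -- sum up
    have hsum : ∑ j : Fin T.card, μ m (W j) ≤ μ m univ :=
      mu_disjoint_sum_le μ hμ_nonneg hμ_add m W hWclopen Finset.univ
        (fun i _ j _ hij => hWdisj i j hij)
    have hlow : (T.card : ℝ) * η ≤ ∑ j : Fin T.card, μ m (W j) := by
      have : ∑ j : Fin T.card, η ≤ ∑ j : Fin T.card, μ m (W j) :=
        Finset.sum_le_sum (fun j _ => le_of_lt (hWbig j))
      simpa using this
    have hfin : (T.card : ℝ) * η ≤ μ m univ := le_trans hlow hsum
    rw [hTcard] at hfin
    push_cast at hfin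
    linarith
  -- pick a good branch by uncountability
  have hcnt : (⋃ m, bad m).Countable := Set.countable_iUnion (fun m => (hbadfin m).countable)
  have hexists : ∃ f : ℕ → Bool, f ∉ ⋃ m, bad m := by
    by_contra hc
    push_neg at hc
    have huniv : (Set.univ : Set (ℕ → Bool)).Countable :=
      hcnt.mono (fun f _ => hc f)
    have : Countable (ℕ → Bool) := Set.countable_univ_iff.mp huniv
    obtain ⟨φ, hφ⟩ := exists_injective_nat (ℕ → Bool)
    set g : ℕ → (ℕ → Bool) := Function.invFun φ with hg
    have hgl : Function.LeftInverse g φ := Function.leftInverse_invFun hφ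
    set h : ℕ → Bool := fun n => !(g n n) with hh
    have h1 : g (φ h) = h := hgl h
    have h2 : h (φ h) = !(g (φ h) (φ h)) := rfl
    rw [h1] at h2
    exact (Bool.eq_not_self _).mp h2
  obtain ⟨f, hf⟩ := hexists
  refine ⟨Ms f, hMsInf f, hVclopen f, fun m => ?_⟩
  by_contra hc
  push_neg at hc
  exact hf (Set.mem_iUnion.mpr ⟨m, hc⟩)

end Part3

section Part4

variable {S : Type*} [TopologicalSpace S]

private lemma serving
    (hSCP : ∀ U : ℕ → Set S, (∀ n, IsClopen (U n)) →
      Pairwise (Function.onFun Disjoint U) →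
      ∃ M : Set ℕ, M.Infinite ∧ IsOpen (closure (⋃ m ∈ M, U m)))
    (μ ν : ℕ → Set S → ℝ)
    (hμ_nonneg : ∀ n A, IsClopen A → 0 ≤ μ n A)
    (hμ_add : ∀ n (A B : Set S), IsClopen A → IsClopen B → Disjoint A B →
      μ n (A ∪ B) = μ n A + μ n B)
    (hν_nonneg : ∀ n A, IsOpen A → 0 ≤ ν n A)
    (hν_mono : ∀ n (A B : Set S), IsOpen A → IsOpen B → A ⊆ B → ν n A ≤ ν n B)
    (hν_add : ∀ n (A B : Set S), IsOpen A → IsOpen B → Disjoint A B →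
      ν n (A ∪ B) = ν n A + ν n B)
    (hν_one : ∀ n, ν n Set.univ = 1)
    (hsep : ∀ n, ∀ ε > (0 : ℝ), ∃ A : Set S, IsClopen A ∧
      (∀ m, μ m A < ε) ∧ ν n Aᶜ < ε)
    (N : Set ℕ) (hN : N.Infinite) {ε : ℝ} (hε : 0 < ε) :
    ∃ A : Set S, IsClopen A ∧ (∀ m, μ m A < ε) ∧ {n ∈ N | ν n Aᶜ < ε}.Infinite := by
  classical
  by_contra hcon
  push_neg at hcon
  have hbad : ∀ A : Set S, IsClopen A → (∀ m, μ m A < ε) → {n ∈ N | ν n Aᶜ < ε}.Finite := by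
    intro A hA hAμ
    exact hcon A hA hAμ
  -- outer chain invariant
  set P : ℕ → Set S × Set ℕ → Prop := fun r a =>
    IsClopen a.1 ∧ (∀ m, μ m a.1 ≤ ε / 2 - ε * (2⁻¹) ^ r / 2) ∧ a.2.Infinite ∧ a.2 ⊆ N ∧
      ∀ n ∈ a.2, ν n a.1ᶜ ≤ 1 - r * (ε / 2) with hP
  have hbase : P 0 (∅, N) := by
    refine ⟨isClopen_empty, fun m => ?_, hN, subset_rfl, fun n _ => ?_⟩
    · rw [mu_empty μ hμ_add m]
      simp
    · rw [Set.compl_empty, hν_one n]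
      simp
  have hstep : ∀ r a, P r a → ∃ b, P (r + 1) b ∧ True := by
    rintro r ⟨U, T⟩ ⟨hUcl, hUμ, hTinf, hTN, hTν⟩
    dsimp only at hUcl hUμ hTinf hTN hTν
    set c : ℝ := (2⁻¹) ^ r with hc
    have hc0 : (0:ℝ) < c := by positivity
    have hc1 : c ≤ 1 := pow_le_one₀ (by norm_num) (by norm_num)
    set η : ℝ := ε * c / 16 with hη
    have hη0 : (0:ℝ) < η := by positivity
    set bnd : ℝ := ε / 2 - ε * c / 2 with hbnd
    -- inner chain
    set P' : ℕ → ℕ × Set S → Prop := fun i a =>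
      IsClopen a.2 ∧ U ⊆ a.2 ∧ ∀ m, μ m a.2 ≤ bnd + 2 * η - 2 * η * (2⁻¹) ^ i with hP'
    set R' : ℕ → ℕ × Set S → ℕ × Set S → Prop := fun i a b =>
      a.1 < b.1 ∧ b.1 ∈ T ∧ a.2 ⊆ b.2 ∧ IsClopen (b.2 \ a.2) ∧
        (∀ m, μ m (b.2 \ a.2) ≤ (2⁻¹) ^ i * η) ∧
        ε - (2⁻¹) ^ i * η ≤ ν b.1 (b.2 \ a.2) with hR'
    have hbase' : P' 0 (0, U) := by
      refine ⟨hUcl, subset_rfl, fun m => ?_⟩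
      have := hUμ m
      simp only [pow_zero]
      linarith
    have hstep' : ∀ i a, P' i a → ∃ b, P' (i + 1) b ∧ R' i a b := by
      rintro i ⟨p, C⟩ ⟨hCcl, hUC, hCμ⟩
      have hd0 : (0:ℝ) < (2⁻¹:ℝ) ^ i := by positivity
      have hd1 : ((2⁻¹:ℝ)) ^ i ≤ 1 := pow_le_one₀ (by norm_num) (by norm_num)
      have hCε : ∀ m, μ m C < ε := by
        intro m
        have := hCμ m
        simp only at this
        nlinarith
      have hFin : {n ∈ N | ν n Cᶜ < ε}.Finite := hbad C hCcl hCε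
      have hT' : (T \ ({n ∈ N | ν n Cᶜ < ε} ∪ Set.Iic p)).Infinite :=
        hTinf.diff (hFin.union (Set.finite_Iic p))
      obtain ⟨q, hqT, hqn⟩ := hT'.nonempty
      have hqN : q ∈ N := hTN hqT
      have hqbig : ε ≤ ν q Cᶜ := by
        by_contra hlt
        push_neg at hlt
        exact hqn (Or.inl ⟨hqN, hlt⟩)
      have hqp : p < q := by
        by_contra hle
        push_neg at hle
        exact hqn (Or.inr hle)
      set δ : ℝ := (2⁻¹) ^ i * η with hδ
      have hδ0 : (0:ℝ) < δ := by positivity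
      obtain ⟨B, hBcl, hBμ, hBν⟩ := hsep q δ hδ0
      refine ⟨(q, C ∪ B), ⟨hCcl.union hBcl, hUC.trans Set.subset_union_left, fun m => ?_⟩,
        hqp, hqT, Set.subset_union_left, (hCcl.union hBcl).diff hCcl, fun m => ?_, ?_⟩
      · -- measure bound for C ∪ B
        have h1 := mu_union_le μ hμ_nonneg hμ_add m hCcl hBcl
        have h2 := hCμ m
        have h3 := (hBμ m).le
        simp only at h2 ⊢
        rw [pow_succ]
        nlinarith
      · -- measure of the hump
        have hsub : (C ∪ B) \ C ⊆ B := by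
          rw [Set.union_diff_left]
          exact Set.diff_subset
        have := mu_mono μ hμ_nonneg hμ_add m (((hCcl.union hBcl).diff hCcl)) hBcl hsub
        have := hBμ m
        simp only
        linarith [mu_mono μ hμ_nonneg hμ_add m (((hCcl.union hBcl).diff hCcl)) hBcl hsub,
          hBμ m]
      · -- ν of the hump
        set D : Set S := (C ∪ B) \ C with hD
        have hDcl : IsClopen D := (hCcl.union hBcl).diff hCcl
        have hunion : C ∪ D = C ∪ B := Set.union_diff_cancel Set.subset_union_left
        have hadd : ν q (C ∪ D) = ν q C + ν q D :=
          hν_add q C D hCcl.isOpen hDcl.isOpen disjoint_sdiff_right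
        have hmono : ν q B ≤ ν q (C ∪ B) :=
          hν_mono q B (C ∪ B) hBcl.isOpen (hCcl.union hBcl).isOpen Set.subset_union_right
        have hBcompl := nu_compl ν hν_add hν_one q hBcl
        have hCcompl := nu_compl ν hν_add hν_one q hCcl
        rw [hunion] at hadd
        simp only
        linarith
    obtain ⟨f', hf0, hPa, hRa⟩ := exists_chain P' R' (0, U) hbase' hstep'
    set Cs : ℕ → Set S := fun i => (f' i).2 with hCs
    set ns : ℕ → ℕ := fun i => (f' (i + 1)).1 with hns
    set Hs : ℕ → Set S := fun i => Cs (i + 1) \ Cs i with hHs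
    have hCmono : Monotone Cs := monotone_nat_of_le_succ (fun i => (hRa i).2.2.1)
    have hHcl : ∀ i, IsClopen (Hs i) := fun i => (hRa i).2.2.2.1
    have hHμ : ∀ m i, μ m (Hs i) ≤ (2⁻¹) ^ i * η := fun m i => (hRa i).2.2.2.2.1 m
    have hHν : ∀ i, ε - (2⁻¹) ^ i * η ≤ ν (ns i) (Hs i) := fun i => (hRa i).2.2.2.2.2
    have hnsT : ∀ i, ns i ∈ T := fun i => (hRa i).2.1
    have hns_mono : StrictMono ns := strictMono_nat_of_lt_succ (fun i => (hRa (i + 1)).1)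
    have hUCs : ∀ i, U ⊆ Cs i := fun i => (hPa i).2.1
    have hHdisj : Pairwise (Function.onFun Disjoint Hs) := by
      have key : ∀ i j, i < j → Disjoint (Hs i) (Hs j) := by
        intro i j hij
        rw [Set.disjoint_left]
        intro x hxi hxj
        exact hxj.2 (hCmono (Nat.succ_le_of_lt hij) hxi.1)
      intro i j hij
      rcases lt_or_gt_of_ne hij with h | h
      · exact key i j h
      · exact (key j i h).symm
    obtain ⟨M, hMinf, hVcl, hVμ⟩ := scp_small hSCP μ hμ_nonneg hμ_add Hs hHcl hHdisj hη0 hHμ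
    set V : Set S := closure (⋃ i ∈ M, Hs i) with hV
    refine ⟨(U ∪ V, (fun i => ns i) '' M), ⟨hUcl.union hVcl, fun m => ?_, ?_, ?_, ?_⟩, trivial⟩
    · -- measure bound
      have h1 := mu_union_le μ hμ_nonneg hμ_add m hUcl hVcl
      have h2 := hUμ m
      have h3 := hVμ m
      have key : bnd + 3 * η ≤ ε / 2 - ε * ((2⁻¹:ℝ) ^ r * 2⁻¹) / 2 := by
        rw [hbnd, hη, hc]
        nlinarith [mul_pos hε (show (0:ℝ) < (2⁻¹:ℝ) ^ r by positivity)]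
      simp only
      rw [pow_succ]
      calc μ m (U ∪ V) ≤ μ m U + μ m V := h1
        _ ≤ bnd + 3 * η := add_le_add h2 h3
        _ ≤ ε / 2 - ε * ((2⁻¹:ℝ) ^ r * 2⁻¹) / 2 := key
    · exact hMinf.image (hns_mono.injective.injOn)
    · rintro n ⟨i, _, rfl⟩
      exact hTN (hnsT i)
    · rintro n' ⟨i, hiM, rfl⟩
      have hHV : Hs i ⊆ V := (Set.subset_biUnion_of_mem hiM).trans subset_closure
      have hUH : Disjoint U (Hs i) := by
        rw [Set.disjoint_left]
        intro x hxU hxH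
        exact hxH.2 (hUCs i hxU)
      have hin : ν (ns i) (U ∪ Hs i) = ν (ns i) U + ν (ns i) (Hs i) :=
        hν_add _ U (Hs i) hUcl.isOpen (hHcl i).isOpen hUH
      have hout : Disjoint ((U ∪ V)ᶜ) (U ∪ Hs i) := by
        rw [Set.disjoint_left]
        intro x hx hx2
        rcases hx2 with h | h
        · exact hx (Or.inl h)
        · exact hx (Or.inr (hHV h))
      have houtadd : ν (ns i) ((U ∪ V)ᶜ ∪ (U ∪ Hs i)) =
          ν (ns i) ((U ∪ V)ᶜ) + ν (ns i) (U ∪ Hs i) :=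
        hν_add _ _ _ (hUcl.union hVcl).isClosed.isOpen_compl
          (hUcl.union (hHcl i)).isOpen hout
      have hle1 : ν (ns i) ((U ∪ V)ᶜ ∪ (U ∪ Hs i)) ≤ 1 :=
        nu_le_one ν hν_mono hν_one _
          ((hUcl.union hVcl).isClosed.isOpen_compl.union (hUcl.union (hHcl i)).isOpen)
      have hUcompl := nu_compl ν hν_add hν_one (ns i) hUcl
      have hTn := hTν (ns i) (hnsT i)
      have hHn := hHν i
      have hd1 : ((2⁻¹:ℝ)) ^ i ≤ 1 := pow_le_one₀ (by norm_num) (by norm_num)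
      have hd0 : (0:ℝ) < (2⁻¹:ℝ) ^ i := by positivity
      have hη16 : η ≤ ε / 16 := by
        rw [hη]
        nlinarith
      have hHbig : ε / 2 ≤ ν (ns i) (Hs i) := by
        have : (2⁻¹:ℝ) ^ i * η ≤ η := by nlinarith
        linarith
      simp only
      push_cast
      linarith
  obtain ⟨g, hg0, hgP, _⟩ := exists_chain P (fun _ _ _ => True) (∅, N) hbase hstep
  obtain ⟨R0, hR0⟩ := exists_nat_gt (2 / ε)
  obtain ⟨q, hq⟩ := (hgP R0).2.2.1.nonempty
  have h1 := (hgP R0).2.2.2.2 q hq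
  have h2 := hν_nonneg q ((g R0).1)ᶜ (hgP R0).1.isClosed.isOpen_compl
  have h3 : 2 < R0 * ε := by
    rw [div_lt_iff₀ hε] at hR0
    linarith
  nlinarith

end Part4
end Stmt10Aux
/-- Key lemma: S is a Haydon space (totally disconnected compact Hausdorff whose clopen
algebra has the subsequential completeness property), (μₙ) nonnegative additive functions
on the clopen algebra, (νₙ) nonnegative monotone additive functions on the topology with
νₙ(S) = 1, and for each n and ε > 0 some clopen set A has μₘ(A) < ε for all m and
νₙ(S∖A) < ε.  Then there is an infinite Λ ⊆ ℕ such that for every ε > 0 a single clopen Q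
works for all m ∈ ℕ and all n ∈ Λ. -/
theorem stmt10 {S : Type*} [TopologicalSpace S] [CompactSpace S] [T2Space S]
    [TotallyDisconnectedSpace S]
    (hSCP : ∀ U : ℕ → Set S, (∀ n, IsClopen (U n)) →
      Pairwise (Function.onFun Disjoint U) →
      ∃ M : Set ℕ, M.Infinite ∧ IsOpen (closure (⋃ m ∈ M, U m)))
    (μ ν : ℕ → Set S → ℝ)
    (hμ_nonneg : ∀ n A, IsClopen A → 0 ≤ μ n A)
    (hμ_add : ∀ n (A B : Set S), IsClopen A → IsClopen B → Disjoint A B →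
      μ n (A ∪ B) = μ n A + μ n B)
    (hν_nonneg : ∀ n A, IsOpen A → 0 ≤ ν n A)
    (hν_mono : ∀ n (A B : Set S), IsOpen A → IsOpen B → A ⊆ B → ν n A ≤ ν n B)
    (hν_add : ∀ n (A B : Set S), IsOpen A → IsOpen B → Disjoint A B →
      ν n (A ∪ B) = ν n A + ν n B)
    (hν_one : ∀ n, ν n Set.univ = 1)
    (hsep : ∀ n, ∀ ε > (0 : ℝ), ∃ A : Set S, IsClopen A ∧
      (∀ m, μ m A < ε) ∧ ν n Aᶜ < ε) :
    ∃ Λ : Set ℕ, Λ.Infinite ∧ ∀ ε > (0 : ℝ), ∃ Q : Set S, IsClopen Q ∧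
      (∀ m, μ m Q < ε) ∧ ∀ n ∈ Λ, ν n Qᶜ < ε := by
  classical
  -- build the nested chain of scales
  set P : ℕ → Set S × Set ℕ × ℕ → Prop := fun k a =>
    IsClopen a.1 ∧ (∀ m, μ m a.1 < 2 * (2⁻¹) ^ k) ∧ a.2.1.Infinite ∧
      (∀ n ∈ a.2.1, ν n a.1ᶜ < 2 * (2⁻¹) ^ k) ∧ a.2.2 ∈ a.2.1 with hPdef
  have hbase : P 0 (∅, Set.univ, 0) := by
    refine ⟨isClopen_empty, fun m => ?_, Set.infinite_univ, fun n _ => ?_, trivial⟩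
    · rw [mu_empty μ hμ_add m]
      norm_num
    · rw [Set.compl_empty, hν_one n]
      norm_num
  have hstep : ∀ k a, P k a → ∃ b, P (k + 1) b ∧ (b.2.1 ⊆ a.2.1 ∧ a.2.2 < b.2.2) := by
    rintro k ⟨A, N, p⟩ ⟨hAcl, hAμ, hNinf, hNν, hpN⟩
    have hpos : (0:ℝ) < (2⁻¹) ^ (k + 1) := by positivity
    obtain ⟨A', hA'cl, hA'μ, hA'inf⟩ := serving hSCP μ ν hμ_nonneg hμ_add hν_nonneg hν_mono
      hν_add hν_one hsep N hNinf hpos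
    set N' : Set ℕ := {n ∈ N | ν n A'ᶜ < (2⁻¹) ^ (k + 1)} with hN'
    obtain ⟨q, hq⟩ := (hA'inf.diff (Set.finite_Iic p)).nonempty
    refine ⟨(A', N', q), ⟨hA'cl, fun m => ?_, hA'inf, fun n hn => ?_, hq.1⟩,
      fun n hn => hn.1, ?_⟩
    · have := hA'μ m
      nlinarith
    · have := hn.2
      nlinarith
    · show p < q
      have := hq.2
      simp only [Set.mem_Iic] at this
      omega
  obtain ⟨g, hg0, hgP, hgR⟩ := exists_chain P _ (∅, Set.univ, 0) hbase hstep
  set Ak : ℕ → Set S := fun k => (g k).1 with hAk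
  set Nk : ℕ → Set ℕ := fun k => (g k).2.1 with hNk
  set nk : ℕ → ℕ := fun k => (g k).2.2 with hnk
  have hNmono : ∀ j k, k ≤ j → Nk j ⊆ Nk k := by
    intro j k hkj
    induction j with
    | zero => rw [Nat.le_zero.mp hkj]
    | succ j ih =>
      rcases Nat.lt_or_ge k (j + 1) with h | h
      · exact ((hgR j).1).trans (ih (by omega))
      · rw [Nat.le_antisymm hkj h]
  have hnk_mono : StrictMono nk := strictMono_nat_of_lt_succ (fun k => (hgR k).2)
  refine ⟨Set.range nk, Set.infinite_range_of_injective hnk_mono.injective, ?_⟩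
  intro ε hε
  -- choose the scale
  obtain ⟨k, hk⟩ := exists_pow_lt_of_lt_one (show (0:ℝ) < ε/4 by linarith)
    (show (2⁻¹:ℝ) < 1 by norm_num)
  -- patch sets for the first k indices
  have hDex : ∀ j : ℕ, ∃ A : Set S, IsClopen A ∧ (∀ m, μ m A < ε * (2⁻¹) ^ (j + 2)) ∧
      ν (nk j) Aᶜ < ε * (2⁻¹) ^ (j + 2) := fun j => hsep (nk j) _ (by positivity)
  choose D hDcl hDμ hDν using hDex
  set Q : Set S := Ak k ∪ ⋃ j ∈ Finset.range k, D j with hQ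
  have hQcl : IsClopen Q := ((hgP k).1).union (biUnion_clopen D hDcl (Finset.range k))
  refine ⟨Q, hQcl, fun m => ?_, ?_⟩
  · -- measure bound
    have h1 : μ m Q ≤ μ m (Ak k) + μ m (⋃ j ∈ Finset.range k, D j) :=
      mu_union_le μ hμ_nonneg hμ_add m (hgP k).1 (biUnion_clopen D hDcl _)
    have h2 : μ m (Ak k) < 2 * (2⁻¹) ^ k := (hgP k).2.1 m
    have h3 : μ m (⋃ j ∈ Finset.range k, D j) ≤ ε / 2 := by
      calc μ m (⋃ j ∈ Finset.range k, D j) ≤ ∑ j ∈ Finset.range k, μ m (D j) :=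
            mu_biUnion_le μ hμ_nonneg hμ_add m D hDcl _
        _ ≤ ∑ j ∈ Finset.range k, ε * (2⁻¹) ^ (j + 2) :=
            Finset.sum_le_sum (fun j _ => (hDμ j m).le)
        _ = (∑ j ∈ Finset.range k, ((2:ℝ)⁻¹) ^ j) * (ε / 4) := by
            rw [Finset.sum_mul]
            refine Finset.sum_congr rfl (fun j _ => ?_)
            rw [pow_add]
            ring
        _ ≤ 2 * (ε / 4) := by
            have := sum_pow_half_le (Finset.range k)
            nlinarith
        _ = ε / 2 := by ring
    nlinarith
  · -- ν bound
    rintro n ⟨j, rfl⟩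
    rcases Nat.lt_or_ge j k with hjk | hjk
    · -- patched indices
      have hsub : Qᶜ ⊆ (D j)ᶜ := by
        apply Set.compl_subset_compl.mpr
        exact (Set.subset_biUnion_of_mem (Finset.mem_range.mpr hjk)).trans
          Set.subset_union_right
      have hm := hν_mono (nk j) Qᶜ (D j)ᶜ hQcl.isClosed.isOpen_compl
        (hDcl j).isClosed.isOpen_compl hsub
      have := hDν j
      have hp1 : ((2⁻¹:ℝ)) ^ (j + 2) ≤ 1 := pow_le_one₀ (by norm_num) (by norm_num)
      nlinarith
    · -- tail indices
      have hmem : nk j ∈ Nk k := hNmono j k hjk (hgP j).2.2.2.2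
      have hνk : ν (nk j) ((Ak k)ᶜ) < 2 * (2⁻¹) ^ k := (hgP k).2.2.2.1 _ hmem
      have hsub : Qᶜ ⊆ (Ak k)ᶜ := Set.compl_subset_compl.mpr Set.subset_union_left
      have hm := hν_mono (nk j) Qᶜ ((Ak k)ᶜ) hQcl.isClosed.isOpen_compl
        ((hgP k).1).isClosed.isOpen_compl hsub
      nlinarith
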